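/- Consider the convex program: minimize Σ_w λ_w Σ_u p_{uw} c_{uw} over p = (p_{uw}) subject to the linear equality constraints Σ_w λ_w p_{uw} = P_U(u) for all u, Σ_u p_{uw} = 1 for all w ∈ supp λ, and the convex inequality constraint Σ_w λ_w Σ_u h(p_{uw}) + H(U) - R ≤ 0, where h(x) = x log₂ x for x ≥ 0 (h(0)=0) and h = +∞ on negatives. Suppose p* is optimal for the program with weights λ, with associated Lagrange multipliers (ν₁*, ν₂*, ν₃*) forming a saddle point. If λ̃ ∈ Δ(𝒲) with supp λ̃ ⊆ supp λ is such that (i) Σ_w λ̃_w p*_{uw} = P_U(u) for all u, (ii) Σ_w λ̃_w Σ_u h(p*_{uw}) = Σ_w λ_w Σ_u h(p*_{uw}), and (iii) Σ_w λ̃_w Σ_u p*_{uw} c_{uw} = Σ_w λ_w Σ_u p*_{uw} c_{uw}, then (p*, ν₁*, ν₂*, ν₃*) is also a saddle point of the Lagrangian of the program with weights λ̃, and hence p* is optimal for the λ̃-program with the same optimal value. -/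
import Mathlib


open scoped BigOperators

noncomputable section

variable {𝒰 𝒲 : Type*} [Fintype 𝒰] [Fintype 𝒲]

/-- `h(x) = x log₂ x` (with `h(0) = 0`). -/
def hEnt (x : ℝ) : ℝ := x * Real.logb 2 x

/-- Entropy (in bits) of the source distribution. -/
def HU (PU : 𝒰 → ℝ) : ℝ := -∑ u : 𝒰, PU u * Real.logb 2 (PU u)

/-- Objective of the convex program with weights `lam`. -/
def obj (lam : 𝒲 → ℝ) (c : 𝒰 → 𝒲 → ℝ) (p : 𝒰 → 𝒲 → ℝ) : ℝ :=
  ∑ w : 𝒲, lam w * ∑ u : 𝒰, p u w * c u w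

/-- Feasibility for the convex program with weights `lam`. -/
def Feas (lam : 𝒲 → ℝ) (PU : 𝒰 → ℝ) (R : ℝ) (p : 𝒰 → 𝒲 → ℝ) : Prop :=
  (∀ u w, 0 ≤ p u w) ∧
  (∀ u, ∑ w : 𝒲, lam w * p u w = PU u) ∧
  (∀ w, lam w ≠ 0 → ∑ u : 𝒰, p u w = 1) ∧
  (∑ w : 𝒲, lam w * ∑ u : 𝒰, hEnt (p u w)) + HU PU - R ≤ 0

/-- Lagrangian of the convex program with weights `lam`. -/
def Lag (lam : 𝒲 → ℝ) (PU : 𝒰 → ℝ) (R : ℝ) (c : 𝒰 → 𝒲 → ℝ)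
    (p : 𝒰 → 𝒲 → ℝ) (ν₁ : 𝒰 → ℝ) (ν₂ : 𝒲 → ℝ) (ν₃ : ℝ) : ℝ :=
  obj lam c p
    + ∑ u : 𝒰, ν₁ u * ((∑ w : 𝒲, lam w * p u w) - PU u)
    + ∑ w : 𝒲, ν₂ w * (lam w * ((∑ u : 𝒰, p u w) - 1))
    + ν₃ * ((∑ w : 𝒲, lam w * ∑ u : 𝒰, hEnt (p u w)) + HU PU - R)

/-- `(p*, ν*)` is a saddle point of the Lagrangian with weights `lam`
(over nonnegative `p` and multipliers with `ν₃ ≥ 0`). -/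
def SaddlePoint (lam : 𝒲 → ℝ) (PU : 𝒰 → ℝ) (R : ℝ) (c : 𝒰 → 𝒲 → ℝ)
    (p : 𝒰 → 𝒲 → ℝ) (ν₁ : 𝒰 → ℝ) (ν₂ : 𝒲 → ℝ) (ν₃ : ℝ) : Prop :=
  (∀ (μ₁ : 𝒰 → ℝ) (μ₂ : 𝒲 → ℝ) (μ₃ : ℝ), 0 ≤ μ₃ →
      Lag lam PU R c p μ₁ μ₂ μ₃ ≤ Lag lam PU R c p ν₁ ν₂ ν₃) ∧
  (∀ q : 𝒰 → 𝒲 → ℝ, (∀ u w, 0 ≤ q u w) →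
      Lag lam PU R c p ν₁ ν₂ ν₃ ≤ Lag lam PU R c q ν₁ ν₂ ν₃)

/-- Per-column contribution to the Lagrangian. -/
def Gcol (c : 𝒰 → 𝒲 → ℝ) (ν₁ : 𝒰 → ℝ) (ν₂ : 𝒲 → ℝ) (ν₃ : ℝ) (w : 𝒲) (x : 𝒰 → ℝ) : ℝ :=
  (∑ u : 𝒰, x u * c u w) + (∑ u : 𝒰, ν₁ u * x u) + ν₂ w * ((∑ u : 𝒰, x u) - 1)
    + ν₃ * ∑ u : 𝒰, hEnt (x u)

lemma lag_decomp (lam : 𝒲 → ℝ) (PU : 𝒰 → ℝ) (R : ℝ) (c : 𝒰 → 𝒲 → ℝ)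
    (p : 𝒰 → 𝒲 → ℝ) (ν₁ : 𝒰 → ℝ) (ν₂ : 𝒲 → ℝ) (ν₃ : ℝ) :
    Lag lam PU R c p ν₁ ν₂ ν₃
      = (∑ w : 𝒲, lam w * Gcol c ν₁ ν₂ ν₃ w (fun u => p u w))
        + (-(∑ u : 𝒰, ν₁ u * PU u) + ν₃ * (HU PU - R)) := by
  have hswap : ∑ u : 𝒰, ν₁ u * ∑ w : 𝒲, lam w * p u w
      = ∑ w : 𝒲, lam w * ∑ u : 𝒰, ν₁ u * p u w := by
    simp only [Finset.mul_sum]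
    rw [Finset.sum_comm]
    exact Finset.sum_congr rfl fun w _ => Finset.sum_congr rfl fun u _ => by ring
  have h1 : ∑ u : 𝒰, ν₁ u * ((∑ w : 𝒲, lam w * p u w) - PU u)
      = (∑ w : 𝒲, lam w * ∑ u : 𝒰, ν₁ u * p u w) - ∑ u : 𝒰, ν₁ u * PU u := by
    simp only [mul_sub, Finset.sum_sub_distrib, hswap]
  have h2 : ∑ w : 𝒲, ν₂ w * (lam w * ((∑ u : 𝒰, p u w) - 1))
      = ∑ w : 𝒲, lam w * (ν₂ w * ((∑ u : 𝒰, p u w) - 1)) :=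
    Finset.sum_congr rfl fun w _ => by ring
  have h3 : ν₃ * ∑ w : 𝒲, lam w * ∑ u : 𝒰, hEnt (p u w)
      = ∑ w : 𝒲, lam w * (ν₃ * ∑ u : 𝒰, hEnt (p u w)) := by
    rw [Finset.mul_sum]
    exact Finset.sum_congr rfl fun w _ => by ring
  have h4 : ν₃ * ((∑ w : 𝒲, lam w * ∑ u : 𝒰, hEnt (p u w)) + HU PU - R)
      = (∑ w : 𝒲, lam w * (ν₃ * ∑ u : 𝒰, hEnt (p u w))) + ν₃ * (HU PU - R) := by
    rw [← h3]; ring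
  unfold Lag obj
  rw [h1, h2, h4]
  simp only [Gcol, mul_add, Finset.sum_add_distrib]
  ring

lemma lag_feas_eq (lam : 𝒲 → ℝ) (PU : 𝒰 → ℝ) (R : ℝ) (c : 𝒰 → 𝒲 → ℝ)
    (p : 𝒰 → 𝒲 → ℝ) (hmarg : ∀ u, ∑ w : 𝒲, lam w * p u w = PU u)
    (hrow : ∀ w, lam w ≠ 0 → ∑ u : 𝒰, p u w = 1)
    (μ₁ : 𝒰 → ℝ) (μ₂ : 𝒲 → ℝ) (μ₃ : ℝ) :
    Lag lam PU R c p μ₁ μ₂ μ₃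
      = obj lam c p + μ₃ * ((∑ w : 𝒲, lam w * ∑ u : 𝒰, hEnt (p u w)) + HU PU - R) := by
  unfold Lag
  have h1 : ∑ u : 𝒰, μ₁ u * ((∑ w : 𝒲, lam w * p u w) - PU u) = 0 :=
    Finset.sum_eq_zero fun u _ => by rw [hmarg u]; ring
  have h2 : ∑ w : 𝒲, μ₂ w * (lam w * ((∑ u : 𝒰, p u w) - 1)) = 0 := by
    refine Finset.sum_eq_zero fun w _ => ?_
    by_cases hw : lam w = 0
    · rw [hw]; ring
    · rw [hrow w hw]; ring
  rw [h1, h2]; ring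

/-- Transfer of optimality from weights `λ` to weights `λ̃`: if `p*` is optimal for the
`λ`-program with saddle-point multipliers `(ν₁*, ν₂*, ν₃*)`, and `λ̃` has support inside
that of `λ` and preserves the marginal, entropy and cost averages of `p*`, then
`(p*, ν*)` is a saddle point for the `λ̃`-program and `p*` is optimal for it with the
same optimal value. -/
theorem saddle_point_transfer
    (lam lamt : 𝒲 → ℝ) (PU : 𝒰 → ℝ) (R : ℝ) (c : 𝒰 → 𝒲 → ℝ)
    (hlam0 : ∀ w, 0 ≤ lam w) (hlam1 : ∑ w : 𝒲, lam w = 1)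
    (hlamt0 : ∀ w, 0 ≤ lamt w) (hlamt1 : ∑ w : 𝒲, lamt w = 1)
    (hPU0 : ∀ u, 0 ≤ PU u) (hPU1 : ∑ u : 𝒰, PU u = 1) (hR : 0 ≤ R)
    (hsupp : ∀ w, lam w = 0 → lamt w = 0)
    (pstar : 𝒰 → 𝒲 → ℝ) (ν₁ : 𝒰 → ℝ) (ν₂ : 𝒲 → ℝ) (ν₃ : ℝ) (hν₃ : 0 ≤ ν₃)
    (hfeas : Feas lam PU R pstar)
    (hopt : ∀ q, Feas lam PU R q → obj lam c pstar ≤ obj lam c q)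
    (hsaddle : SaddlePoint lam PU R c pstar ν₁ ν₂ ν₃)
    (hi : ∀ u, ∑ w : 𝒲, lamt w * pstar u w = PU u)
    (hii : (∑ w : 𝒲, lamt w * ∑ u : 𝒰, hEnt (pstar u w))
          = ∑ w : 𝒲, lam w * ∑ u : 𝒰, hEnt (pstar u w))
    (hiii : obj lamt c pstar = obj lam c pstar) :
    SaddlePoint lamt PU R c pstar ν₁ ν₂ ν₃ ∧
    Feas lamt PU R pstar ∧
    (∀ q, Feas lamt PU R q → obj lamt c pstar ≤ obj lamt c q) ∧
    obj lamt c pstar = obj lam c pstar := by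
  classical
  obtain ⟨hp0, hmarg, hrow, hslack⟩ := hfeas
  -- support transfer for row constraints
  have hrowt : ∀ w, lamt w ≠ 0 → ∑ u : 𝒰, pstar u w = 1 := fun w hw =>
    hrow w (fun h0 => hw (hsupp w h0))
  -- feasibility of p* for lamt
  have hfeast : Feas lamt PU R pstar := ⟨hp0, hi, hrowt, by rw [hii]; exact hslack⟩
  -- slack
  set s : ℝ := (∑ w : 𝒲, lam w * ∑ u : 𝒰, hEnt (pstar u w)) + HU PU - R with hs
  have hs0 : s ≤ 0 := hslack
  -- complementary slackness : ν₃ * s = 0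
  have hcs : ν₃ * s = 0 := by
    have h := hsaddle.1 ν₁ ν₂ 0 le_rfl
    rw [lag_feas_eq lam PU R c pstar hmarg hrow ν₁ ν₂ 0,
        lag_feas_eq lam PU R c pstar hmarg hrow ν₁ ν₂ ν₃, ← hs] at h
    have h1 : 0 ≤ ν₃ * s := by linarith
    have h2 : ν₃ * s ≤ 0 := mul_nonpos_of_nonneg_of_nonpos hν₃ hs0
    linarith
  -- column-wise optimality of p*
  have hcol : ∀ w₀, lam w₀ ≠ 0 → ∀ x : 𝒰 → ℝ, (∀ u, 0 ≤ x u) →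
      Gcol c ν₁ ν₂ ν₃ w₀ (fun u => pstar u w₀) ≤ Gcol c ν₁ ν₂ ν₃ w₀ x := by
    intro w₀ hw₀ x hx
    set q : 𝒰 → 𝒲 → ℝ := fun u w => if w = w₀ then x u else pstar u w with hq
    have hq0 : ∀ u w, 0 ≤ q u w := by
      intro u w
      by_cases h : w = w₀ <;> simp [hq, h, hx u, hp0 u w]
    have h := hsaddle.2 q hq0
    rw [lag_decomp, lag_decomp] at h
    have h' : ∑ w : 𝒲, lam w * Gcol c ν₁ ν₂ ν₃ w (fun u => pstar u w)
        ≤ ∑ w : 𝒲, lam w * Gcol c ν₁ ν₂ ν₃ w (fun u => q u w) := by linarith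
    rw [← Finset.sum_erase_add _ _ (Finset.mem_univ w₀),
        ← Finset.sum_erase_add _ _ (Finset.mem_univ w₀)] at h'
    have heq : ∑ w ∈ Finset.univ.erase w₀, lam w * Gcol c ν₁ ν₂ ν₃ w (fun u => q u w)
        = ∑ w ∈ Finset.univ.erase w₀, lam w * Gcol c ν₁ ν₂ ν₃ w (fun u => pstar u w) := by
      refine Finset.sum_congr rfl fun w hw => ?_
      have hne : w ≠ w₀ := Finset.ne_of_mem_erase hw
      simp [hq, hne]
    rw [heq] at h'
    have hqw₀ : (fun u => q u w₀) = x := by funext u; simp [hq]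
    rw [hqw₀] at h'
    have hlampos : 0 < lam w₀ := lt_of_le_of_ne (hlam0 w₀) (Ne.symm hw₀)
    have := le_of_add_le_add_left h'
    exact le_of_mul_le_mul_left (by linarith) hlampos
  -- saddle point for lamt
  have hsadt : SaddlePoint lamt PU R c pstar ν₁ ν₂ ν₃ := by
    constructor
    · intro μ₁ μ₂ μ₃ hμ₃
      rw [lag_feas_eq lamt PU R c pstar hi hrowt μ₁ μ₂ μ₃,
          lag_feas_eq lamt PU R c pstar hi hrowt ν₁ ν₂ ν₃, hii, ← hs]
      have : μ₃ * s ≤ 0 := mul_nonpos_of_nonneg_of_nonpos hμ₃ hs0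
      linarith [hcs]
    · intro q hq0
      rw [lag_decomp, lag_decomp]
      have : ∑ w : 𝒲, lamt w * Gcol c ν₁ ν₂ ν₃ w (fun u => pstar u w)
          ≤ ∑ w : 𝒲, lamt w * Gcol c ν₁ ν₂ ν₃ w (fun u => q u w) := by
        refine Finset.sum_le_sum fun w _ => ?_
        by_cases hw : lamt w = 0
        · rw [hw]; simp
        · exact mul_le_mul_of_nonneg_left
            (hcol w (fun h0 => hw (hsupp w h0)) _ (fun u => hq0 u w)) (hlamt0 w)
      linarith
  refine ⟨hsadt, hfeast, ?_, hiii⟩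
  intro q hqfeas
  obtain ⟨hq0, hqmarg, hqrow, hqslack⟩ := hqfeas
  have h1 := hsadt.2 q hq0
  rw [lag_feas_eq lamt PU R c pstar hi hrowt ν₁ ν₂ ν₃,
      lag_feas_eq lamt PU R c q hqmarg hqrow ν₁ ν₂ ν₃, hii, ← hs] at h1
  have h2 : ν₃ * ((∑ w : 𝒲, lamt w * ∑ u : 𝒰, hEnt (q u w)) + HU PU - R) ≤ 0 :=
    mul_nonpos_of_nonneg_of_nonpos hν₃ hqslack
  linarith [hcs]

end
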